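/- For every STL formula Φ over S, every trace π : ℕ → S, every time t : ℕ, and every formula ξ ∈ Θ(Φ): if (π,t) ⊨ ξ then it is not the case that (π,t) ⊨ Φ. In particular, taking t = 0, every trace satisfying some member of Θ(Φ) violates Φ. -/
import Mathlib


/-- STL formulas over a type `S` of scenes. -/
inductive STL (S : Type) : Type 1 where
  | atom : (S → Prop) → STL S
  | neg : STL S → STL S
  | conj : STL S → STL S → STL S
  | disj : STL S → STL S → STL S
  | untl : ℕ → ℕ → STL S → STL S → STL S
  | always : ℕ → ℕ → STL S → STL S
  | eventually : ℕ → ℕ → STL S → STL S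
  | next : STL S → STL S

/-- Satisfaction `(π, t) ⊨ φ`. -/
def STL.Sat {S : Type} (π : ℕ → S) : ℕ → STL S → Prop
  | t, .atom p => p (π t)
  | t, .neg φ => ¬ STL.Sat π t φ
  | t, .conj φ ψ => STL.Sat π t φ ∧ STL.Sat π t ψ
  | t, .disj φ ψ => STL.Sat π t φ ∨ STL.Sat π t ψ
  | t, .untl a b φ ψ =>
      ∃ t', t + a ≤ t' ∧ t' ≤ t + b ∧ STL.Sat π t' ψ ∧
        ∀ t'', t ≤ t'' → t'' ≤ t' → STL.Sat π t'' φ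
  | t, .always a b φ => ∀ t', t + a ≤ t' → t' ≤ t + b → STL.Sat π t' φ
  | t, .eventually a b φ => ∃ t', t + a ≤ t' ∧ t' ≤ t + b ∧ STL.Sat π t' φ
  | t, .next φ => STL.Sat π (t + 1) φ

mutual
/-- `Theta Φ`: the set of formulas describing different ways of violating `Φ`.
(In the until case, `Θ(¬φ₁ ∨ φ₂)` and `Θ(φ₁ ∨ φ₂)` are unfolded via the
defining equations `Θ(¬φ₁ ∨ φ₂) = {x ∧ y : x ∈ N(φ₁), y ∈ Θ(φ₂)}` and
`Θ(φ₁ ∨ φ₂) = {x ∧ y : x ∈ Θ(φ₁), y ∈ Θ(φ₂)}`.) -/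
def STL.Theta {S : Type} : STL S → Set (STL S)
  | .atom p => {STL.neg (STL.atom p)}
  | .conj φ ψ => STL.Theta φ ∪ STL.Theta ψ
  | .disj φ ψ => {ξ | ∃ x ∈ STL.Theta φ, ∃ y ∈ STL.Theta ψ, ξ = STL.conj x y}
  | .neg φ => STL.NSat φ
  | .untl a b φ ψ =>
      {ξ | ∃ x ∈ {ζ | ∃ u ∈ STL.NSat φ, ∃ v ∈ STL.Theta ψ, ζ = STL.conj u v},
           ∃ y ∈ {ζ | ∃ u ∈ STL.Theta φ, ∃ v ∈ STL.Theta ψ, ζ = STL.conj u v},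
           ξ = STL.untl a b x y}
      ∪ {ξ | ∃ x ∈ STL.Theta φ, ∃ y ∈ STL.Theta ψ, ξ = STL.conj x y}
  | .always a b φ => {ξ | ∃ x ∈ STL.Theta φ, ξ = STL.eventually a b x}
  | .eventually a b φ => {ξ | ∃ x ∈ STL.Theta φ, ξ = STL.always a b x}
  | .next φ => {ξ | ∃ x ∈ STL.Theta φ, ξ = STL.next x}

/-- `NSat Φ` (written `N(Φ)` in the paper): the set of formulas describing
different ways of satisfying `Φ`. -/
def STL.NSat {S : Type} : STL S → Set (STL S)
  | .atom p => {STL.atom p}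
  | .conj φ ψ => {ξ | ∃ x ∈ STL.NSat φ, ∃ y ∈ STL.NSat ψ, ξ = STL.conj x y}
  | .disj φ ψ => STL.NSat φ ∪ STL.NSat ψ
  | .neg φ => STL.Theta φ
  | .untl a b φ ψ => {ξ | ∃ x ∈ STL.NSat φ, ∃ y ∈ STL.NSat ψ, ξ = STL.untl a b x y}
  | .always a b φ => {ξ | ∃ x ∈ STL.NSat φ, ξ = STL.always a b x}
  | .eventually a b φ => {ξ | ∃ x ∈ STL.NSat φ, ξ = STL.eventually a b x}
  | .next φ => {ξ | ∃ x ∈ STL.NSat φ, ξ = STL.next x}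
end

theorem theta_nsat_sound {S : Type} (Φ : STL S) :
    (∀ (π : ℕ → S) (t : ℕ) (ξ : STL S), ξ ∈ STL.Theta Φ → STL.Sat π t ξ → ¬ STL.Sat π t Φ) ∧
    (∀ (π : ℕ → S) (t : ℕ) (ξ : STL S), ξ ∈ STL.NSat Φ → STL.Sat π t ξ → STL.Sat π t Φ) := by
  induction Φ with
  | atom p =>
    constructor
    · rintro π t ξ hξ hsat
      simp only [STL.Theta, Set.mem_singleton_iff] at hξ
      subst hξ; exact hsat
    · rintro π t ξ hξ hsat
      simp only [STL.NSat, Set.mem_singleton_iff] at hξ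
      subst hξ; exact hsat
  | neg φ ih =>
    constructor
    · rintro π t ξ hξ hsat hΦ
      exact hΦ (ih.2 π t ξ hξ hsat)
    · rintro π t ξ hξ hsat
      exact ih.1 π t ξ hξ hsat
  | conj φ ψ ihφ ihψ =>
    constructor
    · rintro π t ξ hξ hsat hΦ
      rcases hξ with h | h
      · exact ihφ.1 π t ξ h hsat hΦ.1
      · exact ihψ.1 π t ξ h hsat hΦ.2
    · rintro π t ξ ⟨x, hx, y, hy, rfl⟩ hsat
      exact ⟨ihφ.2 π t x hx hsat.1, ihψ.2 π t y hy hsat.2⟩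
  | disj φ ψ ihφ ihψ =>
    constructor
    · rintro π t ξ ⟨x, hx, y, hy, rfl⟩ hsat hΦ
      rcases hΦ with h | h
      · exact ihφ.1 π t x hx hsat.1 h
      · exact ihψ.1 π t y hy hsat.2 h
    · rintro π t ξ hξ hsat
      rcases hξ with h | h
      · exact Or.inl (ihφ.2 π t ξ h hsat)
      · exact Or.inr (ihψ.2 π t ξ h hsat)
  | untl a b φ ψ ihφ ihψ =>
    constructor
    · rintro π t ξ hξ hsat hΦ
      obtain ⟨s, hs1, hs2, hsψ, hsφ⟩ := hΦ
      rcases hξ with ⟨x, ⟨u, hu, v, hv, rfl⟩, y, ⟨u', hu', v', hv', rfl⟩, rfl⟩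
        | ⟨x, hx, y, hy, rfl⟩
      · obtain ⟨t', ht1, ht2, hy, hx⟩ := hsat
        rcases le_or_gt s t' with h | h
        · -- s ≤ t' : Sat x at s gives ¬Sat ψ at s
          have := hx s (le_trans (Nat.le_add_right t a) hs1) h
          exact ihψ.1 π s v hv this.2 hsψ
        · -- t' < s : Sat φ at t' from witness, but ¬Sat φ at t'
          have hφt' := hsφ t' (le_trans (Nat.le_add_right t a) ht1) (le_of_lt h)
          exact ihφ.1 π t' u' hu' hy.1 hφt'
      · -- ξ = conj x y with x ∈ Θφ, y ∈ Θψ : contradiction at time t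
        have hφt := hsφ t le_rfl (le_trans (Nat.le_add_right t a) hs1)
        exact ihφ.1 π t x hx hsat.1 hφt
    · rintro π t ξ ⟨x, hx, y, hy, rfl⟩ ⟨t', ht1, ht2, hyy, hxx⟩
      exact ⟨t', ht1, ht2, ihψ.2 π t' y hy hyy,
        fun t'' h1 h2 => ihφ.2 π t'' x hx (hxx t'' h1 h2)⟩
  | always a b φ ih =>
    constructor
    · rintro π t ξ ⟨x, hx, rfl⟩ ⟨t', ht1, ht2, hxt⟩ hΦ
      exact ih.1 π t' x hx hxt (hΦ t' ht1 ht2)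
    · rintro π t ξ ⟨x, hx, rfl⟩ hsat t' ht1 ht2
      exact ih.2 π t' x hx (hsat t' ht1 ht2)
  | eventually a b φ ih =>
    constructor
    · rintro π t ξ ⟨x, hx, rfl⟩ hsat ⟨t', ht1, ht2, hφt⟩
      exact ih.1 π t' x hx (hsat t' ht1 ht2) hφt
    · rintro π t ξ ⟨x, hx, rfl⟩ ⟨t', ht1, ht2, hxt⟩
      exact ⟨t', ht1, ht2, ih.2 π t' x hx hxt⟩
  | next φ ih =>
    constructor
    · rintro π t ξ ⟨x, hx, rfl⟩ hsat hΦ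
      exact ih.1 π (t + 1) x hx hsat hΦ
    · rintro π t ξ ⟨x, hx, rfl⟩ hsat
      exact ih.2 π (t + 1) x hx hsat

/-- Every trace (at any time) satisfying a member of `Θ(Φ)` violates `Φ`. -/
theorem theta_sound {S : Type} (Φ : STL S) (π : ℕ → S) (t : ℕ) (ξ : STL S)
    (hξ : ξ ∈ STL.Theta Φ) (hsat : STL.Sat π t ξ) : ¬ STL.Sat π t Φ := by
  exact (theta_nsat_sound Φ).1 π t ξ hξ hsat
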